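/- If a finite simple graph Γ has two distinct dominating vertices, then Lights Out is not universally solvable on Γ (i.e., the neighborhood matrix of Γ over 𝔽₂ is not invertible). -/
import Mathlib

open scoped Classical in
/-- The neighborhood matrix of a finite simple graph over the field `ZMod 2`:
the entry at `(i, j)` is `1` if `i = j` or `i` and `j` are adjacent, and `0` otherwise. -/
noncomputable def nbhdMatrix {V : Type} [Fintype V] [DecidableEq V] (G : SimpleGraph V) :
    Matrix V V (ZMod 2) :=
  Matrix.of fun i j => if i = j ∨ G.Adj i j then 1 else 0

/-- Lights Out is universally solvable on a finite simple graph iff its neighborhood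
matrix over `ZMod 2` is invertible. -/
def UniversallySolvable {V : Type} [Fintype V] [DecidableEq V] (G : SimpleGraph V) : Prop :=
  IsUnit (nbhdMatrix G)

/-- If a finite simple graph `Γ` has two distinct dominating vertices, then Lights Out
is not universally solvable on `Γ`. -/
theorem not_universallySolvable_of_two_dominating {V : Type} [Fintype V] [DecidableEq V]
    (G : SimpleGraph V) (u v : V) (huv : u ≠ v)
    (hu : ∀ w : V, w ≠ u → G.Adj u w) (hv : ∀ w : V, w ≠ v → G.Adj v w) :
    ¬ UniversallySolvable G := by
  intro h
  have hdet : (nbhdMatrix G).det = 0 := by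
    apply Matrix.det_zero_of_column_eq huv
    intro k
    have h1 : nbhdMatrix G k u = 1 := by
      simp only [nbhdMatrix, Matrix.of_apply]
      rcases eq_or_ne k u with rfl | hk
      · simp
      · simp [((hu k hk).symm)]
    have h2 : nbhdMatrix G k v = 1 := by
      simp only [nbhdMatrix, Matrix.of_apply]
      rcases eq_or_ne k v with rfl | hk
      · simp
      · simp [((hv k hk).symm)]
    rw [h1, h2]
  have := (Matrix.isUnit_iff_isUnit_det _).mp h
  rw [hdet] at this
  exact (not_isUnit_zero this).elim
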